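/- Let K, K' ⊆ ℝ₊ⁿ be anti-blocking bodies. Then K + (−K') = ⋃_E (P_E K × P_{E⊥}(−K')), where the union is over all coordinate subspaces E of ℝⁿ, P_E denotes orthogonal projection onto E, and P_E K × P_{E⊥}(−K') denotes the Minkowski sum of the two sets lying in the orthogonal complementary subspaces E and E⊥. -/

import Mathlib

open Set MeasureTheory Pointwise
open scoped RealInnerProductSpace

/-- A convex body `K ⊆ ℝ₊ⁿ` (compact, convex, containing `0`) is anti-blocking if
for all `y ∈ K` and `x ∈ ℝ₊ⁿ` with `x ≤ y` coordinatewise, `x ∈ K`. -/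
def IsAntiBlocking (n : ℕ) (K : Set (EuclideanSpace ℝ (Fin n))) : Prop :=
  IsCompact K ∧ Convex ℝ K ∧ (0 : EuclideanSpace ℝ (Fin n)) ∈ K ∧
    (∀ y ∈ K, ∀ i, (0:ℝ) ≤ y i) ∧
    ∀ y ∈ K, ∀ x : EuclideanSpace ℝ (Fin n),
      (∀ i, 0 ≤ x i) → (∀ i, x i ≤ y i) → x ∈ K

/-- Orthogonal projection onto the coordinate subspace spanned by the `e i`, `i ∈ S`. -/
def coordProj {n : ℕ} (S : Finset (Fin n)) (x : EuclideanSpace ℝ (Fin n)) :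
    EuclideanSpace ℝ (Fin n) :=
  WithLp.toLp 2 (fun i => if i ∈ S then x i else 0)

/-- Decomposition of the Minkowski difference of two anti-blocking bodies over all
coordinate subspaces: `K + (-K') = ⋃_E (P_E K + P_{E⊥}(-K'))`. -/
theorem antiBlocking_sub_decomposition {n : ℕ}
    {K K' : Set (EuclideanSpace ℝ (Fin n))}
    (hK : IsAntiBlocking n K) (hK' : IsAntiBlocking n K') :
    K + (-K') = ⋃ S : Finset (Fin n),
      (coordProj S '' K + coordProj Sᶜ '' (-K')) := by
  classical
  obtain ⟨-, -, -, hKpos, hKdown⟩ := hK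
  obtain ⟨-, -, -, hK'pos, hK'down⟩ := hK'
  have projK : ∀ (T : Finset (Fin n)) (y : EuclideanSpace ℝ (Fin n)), y ∈ K →
      coordProj T y ∈ K := by
    intro T y hy
    refine hKdown y hy _ (fun i => ?_) (fun i => ?_) <;> by_cases h : i ∈ T <;>
      simp [coordProj, h, hKpos y hy i]
  have projK' : ∀ (T : Finset (Fin n)) (y : EuclideanSpace ℝ (Fin n)), y ∈ K' →
      coordProj T y ∈ K' := by
    intro T y hy
    refine hK'down y hy _ (fun i => ?_) (fun i => ?_) <;> by_cases h : i ∈ T <;>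
      simp [coordProj, h, hK'pos y hy i]
  ext x
  simp only [Set.mem_iUnion, Set.mem_add]
  constructor
  · rintro ⟨a, ha, b, hb, rfl⟩
    have hb' : -b ∈ K' := Set.mem_neg.mp hb
    set S : Finset (Fin n) := Finset.univ.filter (fun i => 0 ≤ a i + b i) with hS
    have hbnonpos : ∀ i, b i ≤ 0 := by
      intro i
      have := hK'pos _ hb' i
      simpa using neg_nonneg.mp (by simpa using this)
    set k : EuclideanSpace ℝ (Fin n) := WithLp.toLp 2 (fun i => if i ∈ S then a i + b i else 0) with hk
    set k' : EuclideanSpace ℝ (Fin n) := WithLp.toLp 2 (fun i => if i ∈ S then 0 else -(a i + b i)) with hk'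
    have hkK : k ∈ K := by
      refine hKdown a ha _ (fun i => ?_) (fun i => ?_) <;> by_cases h : i ∈ S
      · simp only [hk, h, if_pos]
        exact (Finset.mem_filter.mp h).2
      · simp [hk, h]
      · simp only [hk, h, if_pos]
        linarith [hbnonpos i]
      · simp [hk, h, hKpos a ha i]
    have hk'K : k' ∈ K' := by
      refine hK'down _ hb' _ (fun i => ?_) (fun i => ?_) <;> by_cases h : i ∈ S
      · simp [hk', h]
      · have : ¬ (0 ≤ a i + b i) := fun hc => h (Finset.mem_filter.mpr ⟨Finset.mem_univ i, hc⟩)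
        simp only [hk', h, if_neg, not_false_iff]
        linarith [not_le.mp this]
      · simp only [hk', h, if_pos]
        have := hK'pos _ hb' i
        simpa using this
      · simp only [hk', h, if_neg, not_false_iff]
        show -(a i + b i) ≤ (-b) i
        have := hKpos a ha i
        show -(a i + b i) ≤ -(b i)
        linarith
    refine ⟨S, coordProj S k, Set.mem_image_of_mem _ hkK,
      coordProj Sᶜ (-k'), Set.mem_image_of_mem _ (Set.neg_mem_neg.mpr hk'K), ?_⟩
    ext i
    show (if i ∈ S then k i else 0) + (if i ∈ Sᶜ then (-k') i else 0) = a i + b i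
    by_cases h : i ∈ S <;> simp [hk, hk', h]
  · rintro ⟨S, x₁, ⟨a, ha, rfl⟩, x₂, ⟨c, hc, rfl⟩, rfl⟩
    have hc' : -c ∈ K' := Set.mem_neg.mp hc
    refine ⟨coordProj S a, projK S a ha, coordProj Sᶜ c, ?_, rfl⟩
    have : coordProj Sᶜ c = -(coordProj Sᶜ (-c)) := by
      ext i; show (if i ∈ Sᶜ then c i else 0) = -(if i ∈ Sᶜ then (-c) i else 0)
      by_cases h : i ∈ Sᶜ <;> simp [h]
    rw [this]
    exact Set.neg_mem_neg.mpr (projK' Sᶜ (-c) hc')
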